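/- For every simplicial set X, the following four conditions are equivalent: (1) every edge of X is invertible; (2) the unique map X → Δ[0] has the right lifting property with respect to δ : Δ[1] → bΔ[1]; (3) the inclusion ε_X : G(X) → X is an isomorphism (i.e., G(X) = X); (4) X is isomorphic to G(Y) for some simplicial set Y. -/

import Mathlib

open CategoryTheory CategoryTheory.Limits Opposite

namespace IndexedPaper
/-- The chaotic preorder on two objects. -/
inductive TwoObj : Type
  | zero
  | one

open Simplicial

instance : Preorder TwoObj where
  le _ _ := True
  le_refl _ := trivial
  le_trans _ _ _ _ _ := trivial

/-- `bΔ[1]`, the nerve of the groupoid with two objects and exactly one morphism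
between every ordered pair of objects. -/
def bDelta1 : SSet := CategoryTheory.nerve TwoObj

/-- `δ : Δ[1] ⟶ bΔ[1]`, classifying the morphism from the first object to the second. -/
noncomputable def deltaB : Δ[1] ⟶ bDelta1 :=
  (SSet.yonedaEquiv (X := bDelta1) (n := ⦋1⦌)).symm
    (CategoryTheory.ComposableArrows.mk₁ (homOfLE trivial : TwoObj.zero ⟶ TwoObj.one))

/-- An edge `x : Δ[1] ⟶ X` is invertible if it extends along `δ` to `bΔ[1]`. -/
def IsInvertibleEdge {X : SSet} (x : Δ[1] ⟶ X) : Prop :=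
  ∃ y : bDelta1 ⟶ X, deltaB ≫ y = x

/-- A Kan complex: every horn (`n ≥ 1`, `0 ≤ k ≤ n`) has a filler. -/
def IsKanComplex (K : SSet) : Prop :=
  ∀ ⦃n : ℕ⦄, 1 ≤ n → ∀ (k : Fin (n + 1)) (f : (Λ[n, k] : SSet) ⟶ K),
    ∃ g : Δ[n] ⟶ K, Λ[n, k].ι ≫ g = f

/-- A Kan fibration: right lifting property with respect to all horn inclusions
(`n ≥ 1`, `0 ≤ k ≤ n`). -/
def IsKanFibration {X Y : SSet} (p : X ⟶ Y) : Prop :=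
  ∀ ⦃n : ℕ⦄, 1 ≤ n → ∀ (k : Fin (n + 1)), HasLiftingProperty (Λ[n, k].ι) p

/-! ### Yoneda naturality lemmas -/

lemma yE_comp {X Y : SSet} (f : X ⟶ Y) {n : SimplexCategory}
    (g : SSet.stdSimplex.obj n ⟶ X) :
    SSet.yonedaEquiv (X := Y) (n := n) (g ≫ f) = f.app (op n) (SSet.yonedaEquiv (X := X) (n := n) g) := rfl

lemma yE_symm_comp {X Y : SSet} (f : X ⟶ Y) {n : SimplexCategory} (x : X.obj (op n)) :
    (SSet.yonedaEquiv (X := Y) (n := n)).symm (f.app (op n) x) = (SSet.yonedaEquiv (X := X) (n := n)).symm x ≫ f := by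
  apply (SSet.yonedaEquiv (X := Y) (n := n)).injective
  rw [Equiv.apply_symm_apply, yE_comp, Equiv.apply_symm_apply]

lemma yE_symm_map {X : SSet} {m n : SimplexCategory} (f : m ⟶ n) (x : X.obj (op n)) :
    (SSet.yonedaEquiv (X := X) (n := m)).symm (X.map f.op x) =
      SSet.stdSimplex.map f ≫ (SSet.yonedaEquiv (X := X) (n := n)).symm x := by
  rw [SSet.yonedaEquiv_symm_naturality_left]

/-! ### The functor `G` -/

/-- The set of simplices of `X` all of whose edges are invertible. -/
def GSet (X : SSet) (n : SimplexCategoryᵒᵖ) : Set (X.obj n) :=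
  {x | ∀ e : Δ[1] ⟶ SSet.stdSimplex.obj n.unop,
    IsInvertibleEdge (e ≫ (SSet.yonedaEquiv (X := X) (n := n.unop)).symm x)}

/-- `G X`, the simplicial subset of `X` consisting of the simplices all of whose
edges are invertible. -/
def GObj (X : SSet) : SSet where
  obj n := GSet X n
  map := fun {n m} f => TypeCat.ofHom fun x => ⟨X.map f x.1, by
    intro e
    have h := x.2 (e ≫ SSet.stdSimplex.map f.unop)
    have heq : (SSet.yonedaEquiv (X := X) (n := m.unop)).symm (X.map f x.1) =
        SSet.stdSimplex.map f.unop ≫ (SSet.yonedaEquiv (X := X) (n := n.unop)).symm x.1 :=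
      yE_symm_map f.unop x.1
    rw [heq, ← Category.assoc]
    exact h⟩
  map_id n := by
    ext x
    exact X.map_id_apply n x.1
  map_comp f g := by
    ext x
    exact X.map_comp_apply f g x.1

/-- `ε_X : G X ⟶ X`, the inclusion. -/
def epsilon (X : SSet) : GObj X ⟶ X where
  app n := TypeCat.ofHom fun x => x.1
  naturality _ _ _ := rfl

/-- The functorial action of `G` on a map of simplicial sets. -/
def Gmap {X Y : SSet} (f : X ⟶ Y) : GObj X ⟶ GObj Y where
  app n := TypeCat.ofHom fun x => ⟨f.app n x.1, by
    intro e
    obtain ⟨y, hy⟩ := x.2 e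
    refine ⟨y ≫ f, ?_⟩
    have : (SSet.yonedaEquiv (X := Y) (n := n.unop)).symm (f.app n x.1) =
        (SSet.yonedaEquiv (X := X) (n := n.unop)).symm x.1 ≫ f := yE_symm_comp f x.1
    simp only [this, ← Category.assoc, hy]⟩
  naturality n m g := by
    ext x
    apply Subtype.ext
    exact NatTrans.naturality_apply f g x.1

/-! ### Auxiliary lemmas -/

lemma delta0_ext {m : SimplexCategoryᵒᵖ} (a b : Δ[0].obj m) : a = b := by
  apply SSet.stdSimplex.objEquiv.injective
  ext x
  exact congrArg Fin.val (@Subsingleton.elim (Fin 1) _ _ _)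

/-- The unique map to `Δ[0]`. -/
def toPoint (X : SSet) : X ⟶ Δ[0] where
  app n := TypeCat.ofHom fun _ => SSet.stdSimplex.objEquiv.symm
    (SimplexCategory.Hom.mk ⟨fun _ => 0, fun _ _ _ => le_refl _⟩)
  naturality _ _ _ := by ext; apply delta0_ext

lemma toDelta0_eq {X : SSet} (f g : X ⟶ Δ[0]) : f = g := by
  apply NatTrans.ext
  funext n
  ext x
  apply delta0_ext

/-- The map of nerves induced by a functor. -/
def nerveHom (F : TwoObj ⥤ TwoObj) : bDelta1 ⟶ bDelta1 where
  app _ := TypeCat.ofHom fun σ => σ ⋙ F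
  naturality _ _ _ := rfl

lemma bDelta1_edge_invertible (x : Δ[1] ⟶ bDelta1) : IsInvertibleEdge x := by
  set σ := SSet.yonedaEquiv (X := bDelta1) (n := ⦋1⦌) x with hσ
  refine ⟨nerveHom (Monotone.functor
    (f := fun t => TwoObj.casesOn (motive := fun _ => TwoObj) t (σ.obj 0) (σ.obj 1))
    (fun _ _ _ => trivial)), ?_⟩
  apply (SSet.yonedaEquiv (X := bDelta1) (n := ⦋1⦌)).injective
  have hδ : SSet.yonedaEquiv (X := bDelta1) (n := ⦋1⦌) deltaB =
      CategoryTheory.ComposableArrows.mk₁ (homOfLE trivial : TwoObj.zero ⟶ TwoObj.one) :=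
    Equiv.apply_symm_apply _ _
  rw [yE_comp, hδ, ← hσ]
  exact CategoryTheory.Functor.ext (fun i => by fin_cases i <;> rfl) (fun i j f => Subsingleton.elim _ _)

lemma eps_cancel {W Y : SSet} {a b : W ⟶ GObj Y}
    (h : a ≫ epsilon Y = b ≫ epsilon Y) : a = b := by
  apply NatTrans.ext
  funext n
  ext w
  apply Subtype.ext
  exact congrArg (fun f => f w) (NatTrans.congr_app h n)

lemma factor_through_G {W Y : SSet} (f : W ⟶ Y)
    (h : ∀ (n : SimplexCategoryᵒᵖ) (w : W.obj n), f.app n w ∈ GSet Y n) :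
    ∃ g : W ⟶ GObj Y, g ≫ epsilon Y = f := by
  refine ⟨{ app := fun n => TypeCat.ofHom fun w => ⟨f.app n w, h n w⟩, naturality := ?_ }, rfl⟩
  intro n m φ
  ext w
  apply Subtype.ext
  exact NatTrans.naturality_apply f φ w

lemma gobj_edge_invertible (Y : SSet) (x : Δ[1] ⟶ GObj Y) : IsInvertibleEdge x := by
  set σ := SSet.yonedaEquiv (X := GObj Y) (n := ⦋1⦌) x with hσ
  have hval : (SSet.yonedaEquiv (X := Y) (n := ⦋1⦌)).symm σ.1 = x ≫ epsilon Y := by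
    apply (SSet.yonedaEquiv (X := Y) (n := ⦋1⦌)).injective
    rw [Equiv.apply_symm_apply, yE_comp]
    rfl
  obtain ⟨y, hy⟩ := σ.2 (𝟙 _)
  rw [Category.id_comp, hval] at hy
  obtain ⟨g, hg⟩ := factor_through_G y (fun n w e => by
    rw [show (SSet.yonedaEquiv (X := Y) (n := n.unop)).symm (y.app n w) =
        (SSet.yonedaEquiv (X := bDelta1) (n := n.unop)).symm w ≫ y from yE_symm_comp y w,
      ← Category.assoc]
    obtain ⟨z, hz⟩ := bDelta1_edge_invertible (e ≫ (SSet.yonedaEquiv (X := bDelta1) (n := n.unop)).symm w)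
    exact ⟨z ≫ y, by rw [← Category.assoc, hz]⟩)
  refine ⟨g, eps_cancel ?_⟩
  rw [Category.assoc, hg, hy]

/-- The four characterizations of simplicial sets all of whose edges
are invertible. -/
theorem invertible_edges_tfae (X : SSet) :
    List.TFAE [
      ∀ x : Δ[1] ⟶ X, IsInvertibleEdge x,
      ∀ t : X ⟶ Δ[0], HasLiftingProperty deltaB t,
      IsIso (epsilon X),
      ∃ Y : SSet, Nonempty (X ≅ GObj Y)] := by
  tfae_have 1 → 2
  | h, t => by
    constructor
    intro f g sq
    exact ⟨⟨⟨(h f).choose, (h f).choose_spec, toDelta0_eq _ _⟩⟩⟩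
  tfae_have 2 → 1
  | h, x => by
    have := h (toPoint X)
    have sq : CommSq x deltaB (toPoint X) (toPoint bDelta1) := ⟨toDelta0_eq _ _⟩
    exact ⟨sq.lift, sq.fac_left⟩
  tfae_have 1 → 3
  | h => by
    have : ∀ n, IsIso ((epsilon X).app n) := by
      intro n
      rw [CategoryTheory.isIso_iff_bijective]
      exact ⟨fun a b hab => Subtype.ext hab, fun x => ⟨⟨x, fun e => h _⟩, rfl⟩⟩
    exact NatIso.isIso_of_isIso_app (epsilon X)
  tfae_have 3 → 4
  | h => ⟨X, ⟨(@asIso _ _ _ _ _ h).symm⟩⟩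
  tfae_have 4 → 1
  | ⟨Y, ⟨φ⟩⟩, x => by
    obtain ⟨y, hy⟩ := gobj_edge_invertible Y (x ≫ φ.hom)
    exact ⟨y ≫ φ.inv, by rw [← Category.assoc, hy, Category.assoc, φ.hom_inv_id,
      Category.comp_id]⟩
  tfae_finish

end IndexedPaper
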